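/- Let H be a finite-dimensional complex vector space with a real structure, and N a real nilpotent endomorphism with N^{d+1} = 0. Suppose (H, W, F) is a mixed Hodge structure such that N is a morphism of mixed Hodge structures of type (−1,−1) (i.e. N W_i ⊆ W_{i-2} and N F^p ⊆ F^{p-1}) and W = W(N,d). Then for every p, dim_ℂ Gr_F^p H = dim_ℂ Gr_F^{d-p} H, and hence dim F^p + dim conj(F^{d-p+1}) = dim H for all p. -/

import Mathlib

set_option linter.unusedSectionVars false
set_option maxHeartbeats 1000000

open Module Submodule Finset

section AuxGr

variable {H : Type} [AddCommGroup H] [Module ℂ H] [FiniteDimensional ℂ H]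

private lemma grf_sum_Ioc_consec (f : ℤ → ℤ) {a b c : ℤ} (hab : a ≤ b) (hbc : b ≤ c) :
    ((∑ i ∈ Ioc a b, f i) + ∑ i ∈ Ioc b c, f i) = ∑ i ∈ Ioc a c, f i := by
  rw [← Ioc_union_Ioc_eq_Ioc hab hbc, Finset.sum_union]
  exact Finset.disjoint_left.2 fun x hx h'x =>
    lt_irrefl _ ((mem_Ioc.1 h'x).1.trans_le (mem_Ioc.1 hx).2)

private lemma grf_tele (f : ℤ → ℤ) (lo : ℤ) : ∀ n : ℤ, lo - 1 ≤ n →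
    ∑ k ∈ Finset.Icc lo n, (f k - f (k - 1)) = f n - f (lo - 1) := by
  refine Int.le_induction ?_ ?_
  · have h : Finset.Icc lo (lo - 1) = ∅ := by
      apply Finset.Icc_eq_empty; omega
    simp [h]
  · intro n hn ih
    have h1 : Finset.Icc lo (n + 1) = insert (n + 1) (Finset.Icc lo n) := by
      ext x; simp only [Finset.mem_Icc, Finset.mem_insert]; omega
    have h2 : (n + 1) ∉ Finset.Icc lo n := by simp
    rw [h1, Finset.sum_insert h2, ih]
    have h3 : n + 1 - 1 = n := by ring
    rw [h3]; ring

private lemma grf_sum_shift_map (G : ℤ → ℤ) (c A B : ℤ) :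
    ∑ q ∈ Finset.Ioc A B, G (q + c) = ∑ q ∈ Finset.Ioc (A + c) (B + c), G q := by
  rw [← Finset.map_add_right_Ioc, Finset.sum_map]
  rfl

private lemma grf_sum_shift_map' (G : ℤ → ℤ) (c A B : ℤ) :
    ∑ q ∈ Finset.Ioc A B, G (q - c) = ∑ q ∈ Finset.Ioc (A - c) (B - c), G q := by
  simp only [sub_eq_add_neg]
  rw [← Finset.map_add_right_Ioc, Finset.sum_map]
  rfl

private lemma grf_dimA (f : H →ₗ[ℂ] H) (U W1 V W2 : Submodule ℂ H)
    (hUV : ∀ x ∈ U, f x ∈ V)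
    (h1 : ∀ x ∈ U, f x ∈ W2 → x ∈ W1) (h2 : ∀ x ∈ U, x ∈ W1 → f x ∈ W2) :
    finrank ℂ U + finrank ℂ (V ⊓ W2 : Submodule ℂ H)
      ≤ finrank ℂ V + finrank ℂ (U ⊓ W1 : Submodule ℂ H) := by
  classical
  set p : Submodule ℂ V := W2.comap V.subtype with hp
  set g : U →ₗ[ℂ] V ⧸ p := p.mkQ.comp (f.restrict hUV) with hg
  have hker : LinearMap.ker g = W1.comap U.subtype := by
    ext x
    simp only [hg, LinearMap.mem_ker, LinearMap.comp_apply, Submodule.mkQ_apply,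
      Submodule.Quotient.mk_eq_zero, Submodule.mem_comap]
    constructor
    · intro h; exact h1 x.1 x.2 h
    · intro h; exact h2 x.1 x.2 h
  have e1 : finrank ℂ (LinearMap.ker g) = finrank ℂ (U ⊓ W1 : Submodule ℂ H) := by
    have hEq : W1.comap U.subtype = (U ⊓ W1).comap U.subtype := by
      ext x
      simp only [Submodule.mem_comap, Submodule.mem_inf, Submodule.subtype_apply]
      exact ⟨fun h => ⟨x.2, h⟩, fun h => h.2⟩
    rw [hker, hEq, (Submodule.comapSubtypeEquivOfLe (inf_le_left : U ⊓ W1 ≤ U)).finrank_eq]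
  have e2 : finrank ℂ p = finrank ℂ (V ⊓ W2 : Submodule ℂ H) := by
    have hEq : p = (V ⊓ W2).comap V.subtype := by
      ext x
      simp only [Submodule.mem_comap, Submodule.mem_inf, Submodule.subtype_apply, hp]
      exact ⟨fun h => ⟨x.2, h⟩, fun h => h.2⟩
    rw [hEq, (Submodule.comapSubtypeEquivOfLe (inf_le_left : V ⊓ W2 ≤ V)).finrank_eq]
  have hrank := LinearMap.finrank_range_add_finrank_ker g
  have hq := Submodule.finrank_quotient_add_finrank p
  have hr : finrank ℂ (LinearMap.range g) ≤ finrank ℂ (V ⧸ p) :=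
    Submodule.finrank_le _
  omega

private lemma grf_dimB (f : H →ₗ[ℂ] H) (U W1 V W2 : Submodule ℂ H)
    (hUV : ∀ x ∈ U, f x ∈ V)
    (hsur : V ≤ Submodule.map f U ⊔ W2)
    (h2 : ∀ x ∈ U, x ∈ W1 → f x ∈ W2) :
    finrank ℂ V + finrank ℂ (U ⊓ W1 : Submodule ℂ H)
      ≤ finrank ℂ U + finrank ℂ (V ⊓ W2 : Submodule ℂ H) := by
  classical
  set p : Submodule ℂ V := W2.comap V.subtype with hp
  set g : U →ₗ[ℂ] V ⧸ p := p.mkQ.comp (f.restrict hUV) with hg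
  have hkerge : W1.comap U.subtype ≤ LinearMap.ker g := by
    intro x hx
    simp only [Submodule.mem_comap] at hx
    simp only [hg, LinearMap.mem_ker, LinearMap.comp_apply, Submodule.mkQ_apply,
      Submodule.Quotient.mk_eq_zero]
    exact h2 x.1 x.2 hx
  have hsurj : Function.Surjective g := by
    intro vbar
    obtain ⟨v, rfl⟩ := Submodule.Quotient.mk_surjective _ vbar
    obtain ⟨y, hy, w, hw, hvw⟩ := Submodule.mem_sup.1 (hsur v.2)
    obtain ⟨x, hx, rfl⟩ := hy
    refine ⟨⟨x, hx⟩, ?_⟩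
    simp only [hg, LinearMap.comp_apply, Submodule.mkQ_apply]
    rw [Submodule.Quotient.eq]
    simp only [hp, Submodule.mem_comap]
    show ((f.restrict hUV ⟨x, hx⟩ : V) - v : V).1 ∈ W2
    have hfx : ((f.restrict hUV) ⟨x, hx⟩ : V).1 = f x := rfl
    have hsub : f x - v.1 = -w := by rw [← hvw]; abel
    simp only [AddSubgroupClass.coe_sub, hfx, hsub]
    exact neg_mem hw
  have e1 : finrank ℂ (U ⊓ W1 : Submodule ℂ H) ≤ finrank ℂ (LinearMap.ker g) := by
    refine le_trans (le_of_eq ?_) (Submodule.finrank_mono hkerge)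
    have hEq : W1.comap U.subtype = (U ⊓ W1).comap U.subtype := by
      ext x
      simp only [Submodule.mem_comap, Submodule.mem_inf, Submodule.subtype_apply]
      exact ⟨fun h => ⟨x.2, h⟩, fun h => h.2⟩
    rw [hEq, (Submodule.comapSubtypeEquivOfLe (inf_le_left : U ⊓ W1 ≤ U)).finrank_eq]
  have e2 : finrank ℂ p = finrank ℂ (V ⊓ W2 : Submodule ℂ H) := by
    have hEq : p = (V ⊓ W2).comap V.subtype := by
      ext x
      simp only [Submodule.mem_comap, Submodule.mem_inf, Submodule.subtype_apply, hp]
      exact ⟨fun h => ⟨x.2, h⟩, fun h => h.2⟩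
    rw [hEq, (Submodule.comapSubtypeEquivOfLe (inf_le_left : V ⊓ W2 ≤ V)).finrank_eq]
  have hrange : LinearMap.range g = ⊤ := LinearMap.range_eq_top.2 hsurj
  have hrank := LinearMap.finrank_range_add_finrank_ker g
  have hq := Submodule.finrank_quotient_add_finrank p
  have hfr : finrank ℂ (LinearMap.range g) = finrank ℂ (V ⧸ p) := by
    rw [hrange]; exact finrank_top _ _
  omega

private lemma grf_sigma_zero (σ : H → H)
    (hσsmul : ∀ (c : ℂ) (v : H), σ (c • v) = (starRingEnd ℂ c) • σ v) : σ 0 = 0 := by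
  have h := hσsmul 0 0
  simpa using h

variable (σ : H → H) in
variable (hσadd : ∀ u v : H, σ (u + v) = σ u + σ v) in
variable (hσsmul : ∀ (c : ℂ) (v : H), σ (c • v) = (starRingEnd ℂ c) • σ v) in
private def grfConj (S : Submodule ℂ H) : Submodule ℂ H where
  carrier := σ '' S
  add_mem' := by
    rintro a b ⟨u, hu, rfl⟩ ⟨v, hv, rfl⟩
    exact ⟨u + v, S.add_mem hu hv, hσadd u v⟩
  zero_mem' := ⟨0, S.zero_mem, grf_sigma_zero σ hσsmul⟩
  smul_mem' := by
    rintro c a ⟨u, hu, rfl⟩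
    refine ⟨(starRingEnd ℂ c) • u, S.smul_mem _ hu, ?_⟩
    rw [hσsmul]
    simp

private lemma grfConj_span (σ : H → H)
    (hσadd : ∀ u v : H, σ (u + v) = σ u + σ v)
    (hσsmul : ∀ (c : ℂ) (v : H), σ (c • v) = (starRingEnd ℂ c) • σ v) (S : Submodule ℂ H) :
    Submodule.span ℂ (σ '' S) = grfConj σ hσadd hσsmul S := by
  have : (σ '' S : Set H) = ↑(grfConj σ hσadd hσsmul S) := rfl
  rw [this, Submodule.span_eq]

private lemma grfConj_finrank (σ : H → H)
    (hσadd : ∀ u v : H, σ (u + v) = σ u + σ v)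
    (hσsmul : ∀ (c : ℂ) (v : H), σ (c • v) = (starRingEnd ℂ c) • σ v)
    (hσinv : ∀ v : H, σ (σ v) = v) (S : Submodule ℂ H) :
    finrank ℂ (grfConj σ hσadd hσsmul S) = finrank ℂ S := by
  have hreal : ∀ (r : ℝ) (v : H), σ ((r : ℂ) • v) = (r : ℂ) • σ v := by
    intro r v
    rw [hσsmul, Complex.conj_ofReal]
  let e : S ≃ₗ[ℝ] grfConj σ hσadd hσsmul S :=
    { toFun := fun x => ⟨σ x.1, ⟨x.1, x.2, rfl⟩⟩
      invFun := fun y => ⟨σ y.1, by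
        obtain ⟨u, hu, huy⟩ := y.2
        rw [← huy, hσinv]; exact hu⟩
      left_inv := fun x => by ext; simp [hσinv]
      right_inv := fun y => by ext; simp [hσinv]
      map_add' := fun x y => by ext; exact hσadd _ _
      map_smul' := fun r x => by
        ext
        show σ ((r : ℂ) • (x : H)) = (r : ℂ) • σ (x : H)
        exact hreal r x }
  have h1 : finrank ℝ S = finrank ℝ (grfConj σ hσadd hσsmul S) := e.finrank_eq
  have h2 : finrank ℝ ℂ * finrank ℂ S = finrank ℝ S := finrank_mul_finrank ℝ ℂ S
  have h3 : finrank ℝ ℂ * finrank ℂ (grfConj σ hσadd hσsmul S)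
      = finrank ℝ (grfConj σ hσadd hσsmul S) := finrank_mul_finrank ℝ ℂ _
  have h4 : finrank ℝ ℂ = 2 := Complex.finrank_real_complex
  rw [h4] at h2 h3
  omega

private lemma grfConj_inf (σ : H → H)
    (hσadd : ∀ u v : H, σ (u + v) = σ u + σ v)
    (hσsmul : ∀ (c : ℂ) (v : H), σ (c • v) = (starRingEnd ℂ c) • σ v)
    (hσinv : ∀ v : H, σ (σ v) = v) (S T : Submodule ℂ H) :
    grfConj σ hσadd hσsmul (S ⊓ T) = grfConj σ hσadd hσsmul S ⊓ grfConj σ hσadd hσsmul T := by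
  have hinj : Function.Injective σ := Function.LeftInverse.injective hσinv
  apply Submodule.ext
  intro x
  show x ∈ σ '' ↑(S ⊓ T) ↔ _
  rw [Submodule.mem_inf]
  show _ ↔ x ∈ σ '' ↑S ∧ x ∈ σ '' ↑T
  constructor
  · rintro ⟨u, hu, rfl⟩
    exact ⟨⟨u, hu.1, rfl⟩, ⟨u, hu.2, rfl⟩⟩
  · rintro ⟨⟨u, hu, rfl⟩, ⟨v, hv, hvu⟩⟩
    have hv' : v = u := hinj hvu
    subst hv'
    exact ⟨v, ⟨hu, hv⟩, rfl⟩

end AuxGr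
theorem gr_F_dim_symmetric
    (H : Type) [AddCommGroup H] [Module ℂ H] [FiniteDimensional ℂ H]
    (σ : H → H)
    (hσadd : ∀ u v : H, σ (u + v) = σ u + σ v)
    (hσsmul : ∀ (c : ℂ) (v : H), σ (c • v) = (starRingEnd ℂ c) • σ v)
    (hσinv : ∀ v : H, σ (σ v) = v)
    (d : ℕ) (N : H →ₗ[ℂ] H)
    (hNreal : ∀ v : H, σ (N v) = N (σ v))
    (hNnil : N ^ (d + 1) = 0)
    (W : ℤ → Submodule ℂ H) (F : ℤ → Submodule ℂ H)
    -- W is an increasing exhaustive filtration defined over ℝ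
    (hWinc : ∀ i : ℤ, W i ≤ W (i + 1))
    (hWlow : ∃ a, ∀ i ≤ a, W i = ⊥) (hWhigh : ∃ b, ∀ i : ℤ, b ≤ i → W i = ⊤)
    (hWreal : ∀ i : ℤ, Submodule.span ℂ (σ '' (W i : Set H)) = W i)
    -- F is a decreasing exhaustive filtration
    (hFdec : ∀ p : ℤ, F (p + 1) ≤ F p)
    (hFlow : ∃ a, ∀ p ≤ a, F p = ⊤) (hFhigh : ∃ b, ∀ p : ℤ, b ≤ p → F p = ⊥)
    -- mixed Hodge structure: on each Gr^W_k, the induced filtration is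
    -- k-opposed to its conjugate
    (hMHS : ∀ k p : ℤ,
      (((F p ⊓ W k) ⊔ W (k - 1)) ⊓
        ((Submodule.span ℂ (σ '' (F (k - p + 1) : Set H)) ⊓ W k) ⊔ W (k - 1))
          = W (k - 1)) ∧
      (((F p ⊓ W k) ⊔
        (Submodule.span ℂ (σ '' (F (k - p + 1) : Set H)) ⊓ W k) ⊔ W (k - 1))
          = W k))
    -- N is a morphism of mixed Hodge structures of type (-1,-1)
    (hNW : ∀ i : ℤ, Submodule.map N (W i) ≤ W (i - 2))
    (hNF : ∀ p : ℤ, Submodule.map N (F p) ≤ F (p - 1))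
    -- W = W(N,d): N^l induces isomorphisms Gr^W_{d+l} ≅ Gr^W_{d-l}
    (hWN : ∀ l : ℕ,
      (∀ x ∈ W ((d : ℤ) + l), (N ^ l) x ∈ W ((d : ℤ) - l - 1) →
        x ∈ W ((d : ℤ) + l - 1)) ∧
      (W ((d : ℤ) - l) ≤
        Submodule.map (N ^ l : H →ₗ[ℂ] H) (W ((d : ℤ) + l)) ⊔ W ((d : ℤ) - l - 1))) :
    ∀ p : ℤ,
      ((Module.finrank ℂ (F p) : ℤ) - Module.finrank ℂ (F (p + 1))
        = (Module.finrank ℂ (F ((d : ℤ) - p)) : ℤ)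
          - Module.finrank ℂ (F ((d : ℤ) - p + 1))) ∧
      (Module.finrank ℂ (F p) +
        Module.finrank ℂ
          (Submodule.span ℂ (σ '' (F ((d : ℤ) - p + 1) : Set H)))
        = Module.finrank ℂ H) := by
  classical
  obtain ⟨aW, haW⟩ := hWlow
  obtain ⟨bW, hbW⟩ := hWhigh
  obtain ⟨aF, haF⟩ := hFlow
  obtain ⟨bF, hbF⟩ := hFhigh
  have hWmono : ∀ i j : ℤ, i ≤ j → W i ≤ W j := fun i j hij =>
    Int.le_induction (motive := fun j _ => W i ≤ W j) (le_refl (W i))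
      (fun n _ h => le_trans h (hWinc n)) j hij
  have hFmono : ∀ p q : ℤ, p ≤ q → F q ≤ F p := fun p q hpq =>
    Int.le_induction (motive := fun q _ => F q ≤ F p) (le_refl (F p))
      (fun n _ h => le_trans (hFdec n) h) q hpq
  -- iterated actions of N
  have hNWiter : ∀ (l : ℕ) (i : ℤ), ∀ x ∈ W i, (N ^ l) x ∈ W (i - 2 * l) := by
    intro l
    induction l with
    | zero => intro i x hx; simpa using hx
    | succ l ih =>
        intro i x hx
        have h1 : N x ∈ W (i - 2) := hNW i ⟨x, hx, rfl⟩
        have h2 := ih (i - 2) (N x) h1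
        have h3 : (N ^ (l + 1)) x = (N ^ l) (N x) := by
          rw [pow_succ]; rfl
        rw [h3]
        have h4 : i - 2 - 2 * (l : ℤ) = i - 2 * ((l : ℕ) + 1 : ℕ) := by push_cast; ring
        rwa [h4] at h2
  have hNFiter : ∀ (l : ℕ) (q : ℤ), ∀ x ∈ F q, (N ^ l) x ∈ F (q - l) := by
    intro l
    induction l with
    | zero => intro q x hx; simpa using hx
    | succ l ih =>
        intro q x hx
        have h1 : N x ∈ F (q - 1) := hNF q ⟨x, hx, rfl⟩
        have h2 := ih (q - 1) (N x) h1
        have h3 : (N ^ (l + 1)) x = (N ^ l) (N x) := by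
          rw [pow_succ]; rfl
        rw [h3]
        have h4 : q - 1 - (l : ℤ) = q - ((l : ℕ) + 1 : ℕ) := by push_cast; ring
        rwa [h4] at h2
  -- conjugation facts
  have hcjW : ∀ k : ℤ, grfConj σ hσadd hσsmul (W k) = W k := fun k =>
    (grfConj_span σ hσadd hσsmul (W k)).symm.trans (hWreal k)
  have hbcj : ∀ k q : ℤ,
      finrank ℂ (grfConj σ hσadd hσsmul (F q) ⊓ W k : Submodule ℂ H)
        = finrank ℂ (F q ⊓ W k : Submodule ℂ H) := by
    intro k q
    calc finrank ℂ (grfConj σ hσadd hσsmul (F q) ⊓ W k : Submodule ℂ H)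
        = finrank ℂ (grfConj σ hσadd hσsmul (F q) ⊓ grfConj σ hσadd hσsmul (W k) :
            Submodule ℂ H) := by rw [hcjW]
      _ = finrank ℂ (grfConj σ hσadd hσsmul (F q ⊓ W k) : Submodule ℂ H) := by
            rw [grfConj_inf σ hσadd hσsmul hσinv]
      _ = finrank ℂ (F q ⊓ W k : Submodule ℂ H) :=
            grfConj_finrank σ hσadd hσsmul hσinv _
  -- dimension bookkeeping functions
  set b : ℤ → ℤ → ℤ := fun k q => (finrank ℂ (F q ⊓ W k : Submodule ℂ H) : ℤ) with hbdef
  set w : ℤ → ℤ := fun k => (finrank ℂ (W k) : ℤ) with hwdef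
  set g : ℤ → ℤ → ℤ := fun k q => b k q - b (k - 1) q with hgdef
  set m : ℤ → ℤ := fun k => w k - w (k - 1) with hmdef
  have hWinf : ∀ k k' : ℤ, k' ≤ k → ∀ S : Submodule ℂ H, (S ⊓ W k) ⊓ W k' = S ⊓ W k' := by
    intro k k' hk S
    rw [inf_assoc, inf_eq_right.2 (hWmono k' k hk)]
  -- boundary values
  have hb_top : ∀ k q : ℤ, q ≤ aF → b k q = w k := by
    intro k q hq
    simp only [hbdef, hwdef]
    rw [haF q hq, top_inf_eq]
  have hb_bot : ∀ k q : ℤ, bF ≤ q → b k q = 0 := by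
    intro k q hq
    simp only [hbdef]
    rw [hbF q hq, bot_inf_eq]
    simp
  have hb_Wtop : ∀ k q : ℤ, bW ≤ k → b k q = (finrank ℂ (F q) : ℤ) := by
    intro k q hk
    simp only [hbdef]
    rw [hbW k hk, inf_top_eq]
  have hb_Wbot : ∀ k q : ℤ, k ≤ aW → b k q = 0 := by
    intro k q hk
    simp only [hbdef]
    rw [haW k hk, inf_bot_eq]
    simp
  have hw_top : ∀ k : ℤ, bW ≤ k → w k = (finrank ℂ H : ℤ) := by
    intro k hk
    simp only [hwdef]
    rw [hbW k hk]
    norm_cast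
    exact finrank_top ℂ H
  have hw_bot : ∀ k : ℤ, k ≤ aW → w k = 0 := by
    intro k hk
    simp only [hwdef]
    rw [haW k hk]
    simp
  have hstar : ∀ k q : ℤ, g k q + g k (k - q + 1) = m k := by
    intro k q
    obtain ⟨hm1, hm2⟩ := hMHS k q
    rw [grfConj_span σ hσadd hσsmul] at hm1 hm2
    have h1 : (F q ⊓ W k) ⊓ W (k - 1) = F q ⊓ W (k - 1) :=
      hWinf k (k - 1) (by omega) (F q)
    have h2 : (grfConj σ hσadd hσsmul (F (k - q + 1)) ⊓ W k) ⊓ W (k - 1)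
        = grfConj σ hσadd hσsmul (F (k - q + 1)) ⊓ W (k - 1) :=
      hWinf k (k - 1) (by omega) _
    have hA := Submodule.finrank_sup_add_finrank_inf_eq (F q ⊓ W k) (W (k - 1))
    have hB := Submodule.finrank_sup_add_finrank_inf_eq
      (grfConj σ hσadd hσsmul (F (k - q + 1)) ⊓ W k) (W (k - 1))
    have hAB := Submodule.finrank_sup_add_finrank_inf_eq
      ((F q ⊓ W k) ⊔ W (k - 1)) ((grfConj σ hσadd hσsmul (F (k - q + 1)) ⊓ W k) ⊔ W (k - 1))
    rw [h1] at hA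
    rw [h2] at hB
    have hsup : ((F q ⊓ W k) ⊔ W (k - 1))
        ⊔ ((grfConj σ hσadd hσsmul (F (k - q + 1)) ⊓ W k) ⊔ W (k - 1)) = W k := by
      rw [sup_sup_sup_comm, sup_idem]
      exact hm2
    rw [hm1, hsup] at hAB
    have e1 := hbcj k (k - q + 1)
    have e2 := hbcj (k - 1) (k - q + 1)
    simp only [hgdef, hmdef, hbdef, hwdef]
    omega
  -- the injectivity inequality (I)
  have hineq : ∀ (l : ℕ) (q : ℤ), g ((d : ℤ) + l) q ≤ g ((d : ℤ) - l) (q - l) := by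
    intro l q
    have hUV : ∀ x ∈ F q ⊓ W ((d : ℤ) + l), (N ^ l) x ∈ F (q - l) ⊓ W ((d : ℤ) - l) := by
      intro x hx
      obtain ⟨hxF, hxW⟩ := Submodule.mem_inf.1 hx
      refine Submodule.mem_inf.2 ⟨hNFiter l q x hxF, ?_⟩
      have h := hNWiter l ((d : ℤ) + l) x hxW
      have h4 : (d : ℤ) + l - 2 * l = (d : ℤ) - l := by ring
      rwa [h4] at h
    have h1 : ∀ x ∈ F q ⊓ W ((d : ℤ) + l),
        (N ^ l) x ∈ W ((d : ℤ) - l - 1) → x ∈ W ((d : ℤ) + l - 1) :=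
      fun x hx h => (hWN l).1 x (Submodule.mem_inf.1 hx).2 h
    have h2 : ∀ x ∈ F q ⊓ W ((d : ℤ) + l),
        x ∈ W ((d : ℤ) + l - 1) → (N ^ l) x ∈ W ((d : ℤ) - l - 1) := by
      intro x _ hx1
      have h := hNWiter l ((d : ℤ) + l - 1) x hx1
      have h4 : (d : ℤ) + l - 1 - 2 * l = (d : ℤ) - l - 1 := by ring
      rwa [h4] at h
    have key := grf_dimA (N ^ l) (F q ⊓ W ((d : ℤ) + l)) (W ((d : ℤ) + l - 1))
      (F (q - l) ⊓ W ((d : ℤ) - l)) (W ((d : ℤ) - l - 1)) hUV h1 h2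
    have r1 : (F (q - l) ⊓ W ((d : ℤ) - l)) ⊓ W ((d : ℤ) - l - 1)
        = F (q - l) ⊓ W ((d : ℤ) - l - 1) := hWinf _ _ (by omega) _
    have r2 : (F q ⊓ W ((d : ℤ) + l)) ⊓ W ((d : ℤ) + l - 1)
        = F q ⊓ W ((d : ℤ) + l - 1) := hWinf _ _ (by omega) _
    rw [r1, r2] at key
    simp only [hgdef, hbdef]
    omega
  -- equality of graded weight dimensions
  have hmeq : ∀ l : ℕ, m ((d : ℤ) + l) = m ((d : ℤ) - l) := by
    intro l
    have hUV : ∀ x ∈ W ((d : ℤ) + l), (N ^ l) x ∈ W ((d : ℤ) - l) := by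
      intro x hx
      have h := hNWiter l ((d : ℤ) + l) x hx
      have h4 : (d : ℤ) + l - 2 * l = (d : ℤ) - l := by ring
      rwa [h4] at h
    have h2 : ∀ x ∈ W ((d : ℤ) + l),
        x ∈ W ((d : ℤ) + l - 1) → (N ^ l) x ∈ W ((d : ℤ) - l - 1) := by
      intro x _ hx1
      have h := hNWiter l ((d : ℤ) + l - 1) x hx1
      have h4 : (d : ℤ) + l - 1 - 2 * l = (d : ℤ) - l - 1 := by ring
      rwa [h4] at h
    have kA := grf_dimA (N ^ l) (W ((d : ℤ) + l)) (W ((d : ℤ) + l - 1))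
      (W ((d : ℤ) - l)) (W ((d : ℤ) - l - 1)) hUV (hWN l).1 h2
    have kB := grf_dimB (N ^ l) (W ((d : ℤ) + l)) (W ((d : ℤ) + l - 1))
      (W ((d : ℤ) - l)) (W ((d : ℤ) - l - 1)) hUV (hWN l).2 h2
    have r1 : W ((d : ℤ) - l) ⊓ W ((d : ℤ) - l - 1) = W ((d : ℤ) - l - 1) :=
      inf_eq_right.2 (hWmono _ _ (by omega))
    have r2 : W ((d : ℤ) + l) ⊓ W ((d : ℤ) + l - 1) = W ((d : ℤ) + l - 1) :=
      inf_eq_right.2 (hWmono _ _ (by omega))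
    rw [r1, r2] at kA kB
    simp only [hmdef, hwdef]
    omega
  -- the key vanishing
  have hg_top : ∀ k q : ℤ, q ≤ aF → g k q = m k := by
    intro k q hq
    simp only [hgdef, hmdef]
    rw [hb_top k q hq, hb_top (k - 1) q hq]
  have hg_bot : ∀ k q : ℤ, bF ≤ q → g k q = 0 := by
    intro k q hq
    simp only [hgdef]
    rw [hb_bot k q hq, hb_bot (k - 1) q hq]
    ring
  have hKEY : ∀ (l : ℕ) (q : ℤ),
      (g ((d : ℤ) + l) q - g ((d : ℤ) + l) (q + l))
        + (g ((d : ℤ) - l) q - g ((d : ℤ) - l) (q - l)) = 0 := by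
    intro l q0
    have hterm : ∀ q : ℤ, (g ((d : ℤ) + l) q - g ((d : ℤ) + l) (q + l))
        + (g ((d : ℤ) - l) q - g ((d : ℤ) - l) (q - l)) ≤ 0 := by
      intro q
      have i1 := hineq l q
      have i2 := hineq l ((d : ℤ) - q + 1)
      have s1 := hstar ((d : ℤ) - l) (q - l)
      have e1 : (d : ℤ) - l - (q - l) + 1 = (d : ℤ) - q + 1 := by ring
      rw [e1] at s1
      have s2 := hstar ((d : ℤ) - l) ((d : ℤ) - q + 1 - l)
      have e2 : (d : ℤ) - l - ((d : ℤ) - q + 1 - l) + 1 = q := by ring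
      rw [e2] at s2
      have s3 := hstar ((d : ℤ) + l) (q + l)
      have e3 : (d : ℤ) + l - (q + l) + 1 = (d : ℤ) - q + 1 := by ring
      rw [e3] at s3
      have hme := hmeq l
      linarith
    have hminle : min aF q0 ≤ q0 := min_le_right _ _
    have hminle' : min aF q0 ≤ aF := min_le_left _ _
    have hmaxge : q0 ≤ max (bF - 1) q0 := le_max_right _ _
    have hmaxge' : bF - 1 ≤ max (bF - 1) q0 := le_max_left _ _
    set P : ℤ := min aF q0 - (l : ℤ) - 1 with hPdef
    set Q : ℤ := max (bF - 1) q0 + (l : ℤ) with hQdef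
    have hl0 : (0 : ℤ) ≤ (l : ℤ) := Int.ofNat_nonneg l
    have hPQ1 : P + l ≤ Q := by omega
    have hsplit1 : ∑ q ∈ Ioc P Q, (g ((d : ℤ) + l) q - g ((d : ℤ) + l) (q + l))
        = (∑ q ∈ Ioc P (P + l), g ((d : ℤ) + l) q)
          - ∑ q ∈ Ioc Q (Q + l), g ((d : ℤ) + l) q := by
      rw [Finset.sum_sub_distrib, grf_sum_shift_map (g ((d : ℤ) + l)) (l : ℤ) P Q]
      have t1 := grf_sum_Ioc_consec (g ((d : ℤ) + l))
        (show P ≤ P + l by omega) hPQ1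
      have t2 := grf_sum_Ioc_consec (g ((d : ℤ) + l)) hPQ1
        (show Q ≤ Q + l by omega)
      linarith
    have hsplit2 : ∑ q ∈ Ioc P Q, (g ((d : ℤ) - l) q - g ((d : ℤ) - l) (q - l))
        = (∑ q ∈ Ioc (Q - l) Q, g ((d : ℤ) - l) q)
          - ∑ q ∈ Ioc (P - l) P, g ((d : ℤ) - l) q := by
      rw [Finset.sum_sub_distrib, grf_sum_shift_map' (g ((d : ℤ) - l)) (l : ℤ) P Q]
      have t1 := grf_sum_Ioc_consec (g ((d : ℤ) - l))
        (show P - l ≤ P by omega) (show P ≤ Q by omega)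
      have t2 := grf_sum_Ioc_consec (g ((d : ℤ) - l))
        (show P - l ≤ Q - l by omega) (show Q - l ≤ Q by omega)
      linarith
    have v1 : ∑ q ∈ Ioc P (P + l), g ((d : ℤ) + l) q = l * m ((d : ℤ) + l) := by
      rw [Finset.sum_congr rfl (fun q hq => hg_top ((d : ℤ) + l) q (by
        have := (Finset.mem_Ioc.1 hq).2; omega)), Finset.sum_const, Int.card_Ioc]
      have hc : (P + l - P).toNat = l := by omega
      rw [hc]
      simp [nsmul_eq_mul]
    have v2 : ∑ q ∈ Ioc Q (Q + l), g ((d : ℤ) + l) q = 0 :=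
      Finset.sum_eq_zero (fun q hq => hg_bot ((d : ℤ) + l) q (by
        have := (Finset.mem_Ioc.1 hq).1; omega))
    have v3 : ∑ q ∈ Ioc (Q - l) Q, g ((d : ℤ) - l) q = 0 :=
      Finset.sum_eq_zero (fun q hq => hg_bot ((d : ℤ) - l) q (by
        have := (Finset.mem_Ioc.1 hq).1; omega))
    have v4 : ∑ q ∈ Ioc (P - l) P, g ((d : ℤ) - l) q = l * m ((d : ℤ) - l) := by
      rw [Finset.sum_congr rfl (fun q hq => hg_top ((d : ℤ) - l) q (by
        have := (Finset.mem_Ioc.1 hq).2; omega)), Finset.sum_const, Int.card_Ioc]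
      have hc : (P - (P - l)).toNat = l := by omega
      rw [hc]
      simp [nsmul_eq_mul]
    have htotal : ∑ q ∈ Ioc P Q, ((g ((d : ℤ) + l) q - g ((d : ℤ) + l) (q + l))
        + (g ((d : ℤ) - l) q - g ((d : ℤ) - l) (q - l))) = 0 := by
      rw [Finset.sum_add_distrib, hsplit1, hsplit2, v1, v2, v3, v4, hmeq l]
      ring
    have hzero := (Finset.sum_eq_zero_iff_of_nonpos (fun q _ => hterm q)).1 htotal
    exact hzero q0 (Finset.mem_Ioc.2 (by omega))
  -- pairing form
  have hpairhalf : ∀ (k q : ℤ), (d : ℤ) ≤ k →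
      (g k q + g k ((d : ℤ) - q + 1) - m k)
        + (g (2 * d - k) q + g (2 * d - k) ((d : ℤ) - q + 1) - m (2 * d - k)) = 0 := by
    intro k q hk
    set l : ℕ := (k - (d : ℤ)).toNat with hldef
    have hdl : (d : ℤ) + l = k := by omega
    have hdl' : (d : ℤ) - l = 2 * d - k := by omega
    have h := hKEY l q
    have s1 := hstar ((d : ℤ) + l) (q + l)
    have e1 : (d : ℤ) + l - (q + l) + 1 = (d : ℤ) - q + 1 := by ring
    rw [e1] at s1
    have s2 := hstar ((d : ℤ) - l) (q - l)
    have e2 : (d : ℤ) - l - (q - l) + 1 = (d : ℤ) - q + 1 := by ring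
    rw [e2] at s2
    rw [hdl] at h s1
    rw [hdl'] at h s2
    linarith
  have hpair : ∀ (k q : ℤ),
      (g k q + g k ((d : ℤ) - q + 1) - m k)
        + (g (2 * d - k) q + g (2 * d - k) ((d : ℤ) - q + 1) - m (2 * d - k)) = 0 := by
    intro k q
    rcases le_or_gt (d : ℤ) k with hk | hk
    · exact hpairhalf k q hk
    · have h := hpairhalf (2 * d - k) q (by omega)
      have h2 : 2 * (d : ℤ) - (2 * d - k) = k := by ring
      rw [h2] at h
      linarith
  -- the main dimension identity
  have main2 : ∀ q : ℤ,
      (finrank ℂ (F q) : ℤ) + finrank ℂ (F ((d : ℤ) - q + 1)) = finrank ℂ H := by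
    intro q
    have ht1 : (d : ℤ) - aW - 1 ≤ max (max ((d : ℤ) - aW - 1) (bW - d)) 0 :=
      le_trans (le_max_left _ _) (le_max_left _ _)
    have ht2 : bW - d ≤ max (max ((d : ℤ) - aW - 1) (bW - d)) 0 :=
      le_trans (le_max_right _ _) (le_max_left _ _)
    have ht0 : (0 : ℤ) ≤ max (max ((d : ℤ) - aW - 1) (bW - d)) 0 := le_max_right _ _
    set t : ℤ := max (max ((d : ℤ) - aW - 1) (bW - d)) 0 with htdef
    set K1 : ℤ := (d : ℤ) - t with hK1def
    set K2 : ℤ := (d : ℤ) + t with hK2def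
    have T1 : ∑ k ∈ Finset.Icc K1 K2, g k q = b K2 q - b (K1 - 1) q := by
      simp only [hgdef]
      exact grf_tele (fun k => b k q) K1 K2 (by omega)
    have T2 : ∑ k ∈ Finset.Icc K1 K2, g k ((d : ℤ) - q + 1)
        = b K2 ((d : ℤ) - q + 1) - b (K1 - 1) ((d : ℤ) - q + 1) := by
      simp only [hgdef]
      exact grf_tele (fun k => b k ((d : ℤ) - q + 1)) K1 K2 (by omega)
    have T3 : ∑ k ∈ Finset.Icc K1 K2, m k = w K2 - w (K1 - 1) := by
      simp only [hmdef]
      exact grf_tele w K1 K2 (by omega)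
    have hbK2 : b K2 q = (finrank ℂ (F q) : ℤ) := hb_Wtop K2 q (by omega)
    have hbK2' : b K2 ((d : ℤ) - q + 1) = (finrank ℂ (F ((d : ℤ) - q + 1)) : ℤ) :=
      hb_Wtop K2 _ (by omega)
    have hbK1 : b (K1 - 1) q = 0 := hb_Wbot _ _ (by omega)
    have hbK1' : b (K1 - 1) ((d : ℤ) - q + 1) = 0 := hb_Wbot _ _ (by omega)
    have hwK2 : w K2 = (finrank ℂ H : ℤ) := hw_top _ (by omega)
    have hwK1 : w (K1 - 1) = 0 := hw_bot _ (by omega)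
    have hS : ∑ k ∈ Finset.Icc K1 K2,
        (g k q + g k ((d : ℤ) - q + 1) - m k) = 0 := by
      refine Finset.sum_involution (fun k _ => 2 * (d : ℤ) - k) ?_ ?_ ?_ ?_
      · intro k _
        exact hpair k q
      · intro k ha hfk heq
        apply hfk
        have heq' : 2 * (d : ℤ) - k = k := heq
        have h := hpair k q
        rw [heq'] at h
        linarith
      · intro k hk
        simp only [Finset.mem_Icc] at hk ⊢
        omega
      · intro k _
        show 2 * (d : ℤ) - (2 * (d : ℤ) - k) = k
        ring
    have hsplit : ∑ k ∈ Finset.Icc K1 K2, (g k q + g k ((d : ℤ) - q + 1) - m k)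
        = (∑ k ∈ Finset.Icc K1 K2, g k q)
          + (∑ k ∈ Finset.Icc K1 K2, g k ((d : ℤ) - q + 1))
          - ∑ k ∈ Finset.Icc K1 K2, m k := by
      rw [Finset.sum_sub_distrib, Finset.sum_add_distrib]
    rw [hsplit, T1, T2, T3, hbK2, hbK2', hbK1, hbK1', hwK2, hwK1] at hS
    linarith
  -- conclusion
  intro p
  constructor
  · have h1 := main2 p
    have h2 := main2 (p + 1)
    have h3 : (d : ℤ) - (p + 1) + 1 = d - p := by ring
    rw [h3] at h2
    omega
  · have h1 := main2 p
    rw [grfConj_span σ hσadd hσsmul, grfConj_finrank σ hσadd hσsmul hσinv]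
    omega
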